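/- (Core of Proposition 2: obstacle avoidance at a star boundary point) Let ρ > 0, u ∈ ℝ² with u ≠ 0, g ∈ ℝ², q > 0, and let A = (ρ/‖u‖)·I + u·wᵀ with w = −(ρ/‖u‖³)·u + q·g. Assume det A ≠ 0. Then for every t ∈ ℝ² with ⟨t, u⟩ ≥ 0, the vector v = A⁻¹t satisfies ⟨v, g⟩ ≥ 0. -/

import Mathlib

noncomputable section
open RealInnerProductSpace Matrix

/-- (Core of Proposition 2: obstacle avoidance at a star boundary point) Let
A = (ρ/‖u‖)·I + u·wᵀ with w = −(ρ/‖u‖³)u + q·g, where ρ > 0, q > 0, u ≠ 0 and det A ≠ 0.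
Then for every t with ⟨t, u⟩ ≥ 0, the vector v = A⁻¹t satisfies ⟨v, g⟩ ≥ 0. -/
theorem obstacle_avoidance_at_boundary (ρ q : ℝ) (hρ : 0 < ρ) (hq : 0 < q)
    (u g : EuclideanSpace ℝ (Fin 2)) (hu : u ≠ 0)
    (w : EuclideanSpace ℝ (Fin 2))
    (hw : w = (-(ρ / ‖u‖ ^ 3)) • u + q • g)
    (A : Matrix (Fin 2) (Fin 2) ℝ)
    (hA : A = (ρ / ‖u‖) • (1 : Matrix (Fin 2) (Fin 2) ℝ) +
      Matrix.vecMulVec (fun i => u i) (fun i => w i))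
    (hdet : A.det ≠ 0) :
    ∀ t v : EuclideanSpace ℝ (Fin 2), ⟪t, u⟫ ≥ 0 →
      (∀ i, v i = A⁻¹.mulVec (fun j => t j) i) → ⟪v, g⟫ ≥ 0 := by
  intro t v ht hv
  have hn : (0:ℝ) < ‖u‖ := norm_pos_iff.mpr hu
  have hvu : (fun j => v j) = A⁻¹.mulVec (fun j => t j) := funext hv
  have hAt : A.mulVec (fun j => v j) = (fun j => t j) := by
    rw [hvu, Matrix.mulVec_mulVec, Matrix.mul_nonsing_inv A (isUnit_iff_ne_zero.mpr hdet),
      Matrix.one_mulVec]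
  have ht0 := congrFun hAt 0
  have ht1 := congrFun hAt 1
  simp [hA, Matrix.mulVec, dotProduct, Fin.sum_univ_two, Matrix.vecMulVec_apply,
    Matrix.one_apply, Matrix.add_apply, Matrix.smul_apply] at ht0 ht1
  have hw0 : w 0 = -(ρ / ‖u‖ ^ 3) * u 0 + q * g 0 := by
    rw [hw]; simp
  have hw1 : w 1 = -(ρ / ‖u‖ ^ 3) * u 1 + q * g 1 := by
    rw [hw]; simp
  have hnsq : u 0 * u 0 + u 1 * u 1 = ‖u‖ ^ 2 := by
    have h := real_inner_self_eq_norm_sq u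
    rw [← h]
    simp only [PiLp.inner_apply, RCLike.inner_apply, Fin.sum_univ_two, conj_trivial]
  have htin : ⟪t, u⟫ = t 0 * u 0 + t 1 * u 1 := by
    simp [PiLp.inner_apply, RCLike.inner_apply, Fin.sum_univ_two]; ring
  have hvg : ⟪v, g⟫ = v 0 * g 0 + v 1 * g 1 := by
    simp [PiLp.inner_apply, RCLike.inner_apply, Fin.sum_univ_two]; ring
  have hcube : ρ / ‖u‖ ^ 3 * ‖u‖ ^ 2 = ρ / ‖u‖ := by
    field_simp
  have key : t 0 * u 0 + t 1 * u 1 = q * ‖u‖ ^ 2 * (v 0 * g 0 + v 1 * g 1) := by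
    rw [← ht0, ← ht1, hw0, hw1]
    linear_combination hnsq * (-(ρ / ‖u‖ ^ 3) * (u 0 * v 0 + u 1 * v 1) +
      q * (g 0 * v 0 + g 1 * v 1)) - (u 0 * v 0 + u 1 * v 1) * hcube
  rw [htin] at ht
  rw [hvg]
  rw [key] at ht
  have hc : (0:ℝ) < q * ‖u‖ ^ 2 := by positivity
  by_contra h
  push_neg at h
  nlinarith
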